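/- If $\gamma>1$ and the upstream state $(V_0,C_0)$ satisfies the supersonic condition $C_0^2<(1+V_0)^2$ with $1+V_0>0$, then the downstream state defined by $1+V_1=\frac{\gamma-1}{\gamma+1}(1+V_0)+\frac{2C_0^2}{(\gamma+1)(1+V_0)}$ and $C_1^2=C_0^2+\frac{\gamma-1}{2}[(1+V_0)^2-(1+V_1)^2]$ satisfies $C_1^2>(1+V_1)^2$. -/

import Mathlib

/-- If the upstream state is supersonic, the downstream state is subsonic
(the admissibility of similarity shocks). -/
theorem stmt1 (γ V0 C0 V1 C1sq : ℝ) (hγ : 1 < γ) (hV0 : 0 < 1 + V0)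
    (hsup : C0 ^ 2 < (1 + V0) ^ 2)
    (h1 : 1 + V1 = (γ - 1) / (γ + 1) * (1 + V0) + 2 * C0 ^ 2 / ((γ + 1) * (1 + V0)))
    (h2 : C1sq = C0 ^ 2 + (γ - 1) / 2 * ((1 + V0) ^ 2 - (1 + V1) ^ 2)) :
    (1 + V1) ^ 2 < C1sq := by
  have hγ1 : (0:ℝ) < γ + 1 := by linarith
  have hne : (γ + 1) * (1 + V0) ≠ 0 := by positivity
  have h1' : (1 + V1) * ((γ + 1) * (1 + V0)) = (γ - 1) * (1 + V0) ^ 2 + 2 * C0 ^ 2 := by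
    field_simp at h1
    apply mul_left_cancel₀ (ne_of_gt hγ1)
    linear_combination (γ + 1) * h1
  have hw2 : (1 + V1) ^ 2 * ((γ + 1) * (1 + V0)) ^ 2
      = ((γ - 1) * (1 + V0) ^ 2 + 2 * C0 ^ 2) ^ 2 := by
    linear_combination ((1 + V1) * ((γ + 1) * (1 + V0)) + ((γ - 1) * (1 + V0) ^ 2 + 2 * C0 ^ 2)) * h1'
  have key : ((γ + 1) * (1 + V0)) ^ 2 * (C1sq - (1 + V1) ^ 2)
      = (γ + 1) * ((1 + V0) ^ 2 - C0 ^ 2) * ((γ - 1) * (1 + V0) ^ 2 + 2 * C0 ^ 2) := by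
    linear_combination (((γ + 1) * (1 + V0)) ^ 2) * h2 - (γ + 1) / 2 * hw2
  have hf1 : 0 < (1 + V0) ^ 2 - C0 ^ 2 := by linarith
  have hf2 : 0 < (γ - 1) * (1 + V0) ^ 2 + 2 * C0 ^ 2 := by
    have h0 : 0 < (γ - 1) * (1 + V0) ^ 2 := mul_pos (by linarith) (by positivity)
    nlinarith [sq_nonneg C0]
  have hA : 0 < ((γ + 1) * (1 + V0)) ^ 2 := by positivity
  by_contra hcon
  push_neg at hcon
  have hle : ((γ + 1) * (1 + V0)) ^ 2 * (C1sq - (1 + V1) ^ 2) ≤ 0 :=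
    mul_nonpos_of_nonneg_of_nonpos hA.le (by linarith)
  have hpos : 0 < (γ + 1) * ((1 + V0) ^ 2 - C0 ^ 2) * ((γ - 1) * (1 + V0) ^ 2 + 2 * C0 ^ 2) :=
    mul_pos (mul_pos hγ1 hf1) hf2
  linarith [key]
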